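/- Let R be a strongly ℤ-graded ring with grading 𝒜. Then R, the subring R_{≤0}, and the subring R_{≥0} are each projective as left 𝒜 0-modules (via multiplication). Consequently, every projective module over R (respectively over R_{≤0}, respectively over R_{≥0}) is projective as an 𝒜 0-module after restriction of scalars along the inclusion of 𝒜 0. -/

import Mathlib

universe u

/-- A ℤ-graded ring is *strongly graded* if `𝒜 i * 𝒜 j = 𝒜 (i + j)` for all `i j`. -/
def IsStronglyGraded {R : Type*} [Ring R] (𝒜 : ℤ → Submodule ℤ R) : Prop :=
  ∀ i j : ℤ, 𝒜 i * 𝒜 j = 𝒜 (i + j)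

variable {R : Type*} [Ring R] (𝒜 : ℤ → Submodule ℤ R) [GradedRing 𝒜]

/-- `R_{≤k}`, the sum of the homogeneous components of degree at most `k`. -/
def Rle (k : ℤ) : Submodule ℤ R := ⨆ n ≤ k, 𝒜 n

/-- `R_{≥k}`, the sum of the homogeneous components of degree at least `k`. -/
def Rge (k : ℤ) : Submodule ℤ R := ⨆ n ≥ k, 𝒜 n

theorem Rle_mul_Rle (a b : ℤ) : Rle 𝒜 a * Rle 𝒜 b ≤ Rle 𝒜 (a + b) := by
  rw [Rle, Rle, Submodule.iSup_mul]
  refine iSup_le fun n => ?_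
  rw [Submodule.iSup_mul]
  refine iSup_le fun hn => ?_
  rw [Submodule.mul_iSup]
  refine iSup_le fun m => ?_
  rw [Submodule.mul_iSup]
  refine iSup_le fun hm => ?_
  refine le_trans (Submodule.mul_le.2 fun x hx y hy => SetLike.mul_mem_graded hx hy) ?_
  exact le_iSup₂_of_le (n + m) (add_le_add hn hm) le_rfl

theorem Rge_mul_Rge (a b : ℤ) : Rge 𝒜 a * Rge 𝒜 b ≤ Rge 𝒜 (a + b) := by
  rw [Rge, Rge, Submodule.iSup_mul]
  refine iSup_le fun n => ?_
  rw [Submodule.iSup_mul]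
  refine iSup_le fun hn => ?_
  rw [Submodule.mul_iSup]
  refine iSup_le fun m => ?_
  rw [Submodule.mul_iSup]
  refine iSup_le fun hm => ?_
  refine le_trans (Submodule.mul_le.2 fun x hx y hy => SetLike.mul_mem_graded hx hy) ?_
  exact le_iSup₂_of_le (n + m) (add_le_add hn hm) le_rfl

theorem grade_mem_Rle {k : ℤ} {x : R} (hx : x ∈ 𝒜 k) : x ∈ Rle 𝒜 k :=
  Submodule.mem_iSup_of_mem k (Submodule.mem_iSup_of_mem le_rfl hx)

theorem grade_mem_Rge {k : ℤ} {x : R} (hx : x ∈ 𝒜 k) : x ∈ Rge 𝒜 k :=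
  Submodule.mem_iSup_of_mem k (Submodule.mem_iSup_of_mem le_rfl hx)

/-- The subring `R_{≤0}` of `R`. -/
def RleSubring : Subring R where
  carrier := Rle 𝒜 0
  zero_mem' := zero_mem _
  add_mem' := fun h1 h2 => add_mem h1 h2
  neg_mem' := fun h => neg_mem h
  one_mem' := grade_mem_Rle 𝒜 (SetLike.one_mem_graded 𝒜)
  mul_mem' := fun h1 h2 => by
    simpa using Rle_mul_Rle 𝒜 0 0 (Submodule.mul_mem_mul h1 h2)

/-- The subring `R_{≥0}` of `R`. -/
def RgeSubring : Subring R where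
  carrier := Rge 𝒜 0
  zero_mem' := zero_mem _
  add_mem' := fun h1 h2 => add_mem h1 h2
  neg_mem' := fun h => neg_mem h
  one_mem' := grade_mem_Rge 𝒜 (SetLike.one_mem_graded 𝒜)
  mul_mem' := fun h1 h2 => by
    simpa using Rge_mul_Rge 𝒜 0 0 (Submodule.mul_mem_mul h1 h2)

/-- The inclusion of the subring `𝒜 0` into `R`. -/
def incl0 : (𝒜 0) →+* R where
  toFun a := (a : R)
  map_one' := rfl
  map_mul' _ _ := rfl
  map_zero' := rfl
  map_add' _ _ := rfl

/-- The inclusion of the subring `𝒜 0` into the subring `R_{≤0}`. -/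
def incl0le : (𝒜 0) →+* RleSubring 𝒜 where
  toFun a := ⟨(a : R), grade_mem_Rle 𝒜 a.2⟩
  map_one' := rfl
  map_mul' _ _ := rfl
  map_zero' := rfl
  map_add' _ _ := rfl

/-- The inclusion of the subring `𝒜 0` into the subring `R_{≥0}`. -/
def incl0ge : (𝒜 0) →+* RgeSubring 𝒜 where
  toFun a := ⟨(a : R), grade_mem_Rge 𝒜 a.2⟩
  map_one' := rfl
  map_mul' _ _ := rfl
  map_zero' := rfl
  map_add' _ _ := rfl

/-- Restriction of scalars along `𝒜 0 → R`. -/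
instance restrictFromR (M : Type u) [AddCommMonoid M] [Module R M] :
    Module (𝒜 0) M :=
  Module.compHom M (incl0 𝒜)

/-- Restriction of scalars along `𝒜 0 → R_{≤0}`. -/
instance restrictFromRle (M : Type u) [AddCommMonoid M] [Module (RleSubring 𝒜) M] :
    Module (𝒜 0) M :=
  Module.compHom M (incl0le 𝒜)

/-- Restriction of scalars along `𝒜 0 → R_{≥0}`. -/
instance restrictFromRge (M : Type u) [AddCommMonoid M] [Module (RgeSubring 𝒜) M] :
    Module (𝒜 0) M :=
  Module.compHom M (incl0ge 𝒜)


open DirectSum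

set_option maxHeartbeats 1000000
set_option synthInstance.maxHeartbeats 400000

section AuxGeneral

/-- Extract a finite representation from membership in a product of submodules. -/
theorem exists_fin_rep {p q : Submodule ℤ R} {z : R} (hz : z ∈ p * q) :
    ∃ (k : ℕ) (y x : Fin k → R), (∀ i, y i ∈ p) ∧ (∀ i, x i ∈ q) ∧ ∑ i, y i * x i = z := by
  refine Submodule.mul_induction_on hz (fun m hm n hn => ?_) ?_
  · exact ⟨1, fun _ => m, fun _ => n, fun _ => hm, fun _ => hn, by simp⟩
  · rintro a b ⟨k1, y1, x1, hy1, hx1, h1⟩ ⟨k2, y2, x2, hy2, hx2, h2⟩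
    refine ⟨k1 + k2, Fin.append y1 y2, Fin.append x1 x2, ?_, ?_, ?_⟩
    · intro i
      refine Fin.addCases (motive := fun i => Fin.append y1 y2 i ∈ p) ?_ ?_ i <;>
        intro j <;> simp [Fin.append_left, Fin.append_right, hy1, hy2]
    · intro i
      refine Fin.addCases (motive := fun i => Fin.append x1 x2 i ∈ q) ?_ ?_ i <;>
        intro j <;> simp [Fin.append_left, Fin.append_right, hx1, hx2]
    · rw [Fin.sum_univ_add]
      simp only [Fin.append_left, Fin.append_right, h1, h2]

/-- Two additive maps out of `R` agree if they agree on homogeneous elements. -/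
theorem addHom_ext_homog {X : Type*} [AddCommMonoid X] {φ ψ : R →+ X}
    (H : ∀ (i : ℤ) (x : R), x ∈ 𝒜 i → φ x = ψ x) (r : R) : φ r = ψ r := by
  classical
  conv_lhs => rw [← DirectSum.sum_support_decompose 𝒜 r]
  conv_rhs => rw [← DirectSum.sum_support_decompose 𝒜 r]
  rw [map_sum, map_sum]
  exact Finset.sum_congr rfl fun i _ => H i _ (DirectSum.decompose 𝒜 r i).2

theorem smulA_eq_mul (a : 𝒜 0) (r : R) : a • r = (a : R) * r := rfl

end AuxGeneral

section Trunc

variable (P : ℤ → Prop) [DecidablePred P]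

/-- Truncation of `R` along a predicate on the degrees. -/
noncomputable def trunc : R →+ R :=
  (DFinsupp.sumAddHom fun n =>
      if P n then ((𝒜 n).subtype.toAddMonoidHom) else 0).comp
    (DirectSum.decomposeAddEquiv 𝒜).toAddMonoidHom

theorem trunc_homog {m : ℤ} (c : 𝒜 m) :
    trunc 𝒜 P (c : R) = if P m then (c : R) else 0 := by
  classical
  show DFinsupp.sumAddHom _ (DirectSum.decompose 𝒜 (c : R)) = _
  rw [DirectSum.decompose_coe]
  erw [DFinsupp.sumAddHom_single]
  by_cases hm : P m <;> simp [hm]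

theorem trunc_mem (r : R) : trunc 𝒜 P r ∈ ⨆ (n) (_ : P n), 𝒜 n := by
  classical
  show DFinsupp.sumAddHom _ (DirectSum.decompose 𝒜 r) ∈ _
  rw [DFinsupp.sumAddHom_apply]
  refine Submodule.sum_mem _ fun n _ => ?_
  by_cases hn : P n
  · simp only [hn, if_true]
    exact Submodule.mem_iSup_of_mem n
      (Submodule.mem_iSup_of_mem hn (DirectSum.decompose 𝒜 r n).2)
  · simp [hn]

theorem trunc_smul (a : 𝒜 0) (r : R) :
    trunc 𝒜 P ((a : R) * r) = (a : R) * trunc 𝒜 P r := by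
  refine addHom_ext_homog 𝒜
    (φ := (trunc 𝒜 P).comp (AddMonoidHom.mulLeft (a : R)))
    (ψ := (AddMonoidHom.mulLeft (a : R)).comp (trunc 𝒜 P)) (fun m c hc => ?_) r
  have hac : (a : R) * c ∈ 𝒜 m := by
    have := SetLike.mul_mem_graded a.2 hc
    rwa [zero_add] at this
  show trunc 𝒜 P ((a : R) * c) = (a : R) * trunc 𝒜 P c
  rw [trunc_homog 𝒜 P (⟨c, hc⟩ : 𝒜 m), trunc_homog 𝒜 P (⟨(a : R) * c, hac⟩ : 𝒜 m)]
  by_cases hm : P m <;> simp [hm]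

theorem trunc_eq_self {w : R} (hw : w ∈ ⨆ (n) (_ : P n), 𝒜 n) :
    trunc 𝒜 P w = w := by
  refine Submodule.iSup_induction (fun n => ⨆ (_ : P n), 𝒜 n) (motive := fun w => trunc 𝒜 P w = w)
    hw (fun n x hx => ?_) (map_zero _) (fun x y hx hy => ?_)
  · change x ∈ ⨆ (_ : P n), 𝒜 n at hx
    show trunc 𝒜 P x = x
    by_cases hn : P n
    · rw [iSup_pos hn] at hx
      rw [trunc_homog 𝒜 P (⟨x, hx⟩ : 𝒜 n), if_pos hn]
    · rw [iSup_neg hn] at hx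
      have : x = 0 := hx
      subst this
      exact map_zero _
  · show trunc 𝒜 P (x + y) = x + y
    change trunc 𝒜 P x = x at hx
    change trunc 𝒜 P y = y at hy
    rw [map_add, hx, hy]

end Trunc

section ProjR

/-- `R` is a projective `𝒜 0`-module when the grading is strong. -/
theorem projective_R (h : IsStronglyGraded 𝒜) : Module.Projective (𝒜 0) R := by
  classical
  have hone : ∀ n : ℤ, (1 : R) ∈ 𝒜 (-n) * 𝒜 n := fun n => by
    rw [h (-n) n]
    have := SetLike.one_mem_graded 𝒜
    rwa [show ((-n) + n : ℤ) = 0 by ring]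
  choose k y x hy hx hsum using fun n => exists_fin_rep (hone n)
  have memA0 : ∀ (m : ℤ) (c : R), c ∈ 𝒜 m → ∀ i : Fin (k m), c * y m i ∈ 𝒜 0 := by
    intro m c hc i
    have := SetLike.mul_mem_graded hc (hy m i)
    rwa [show (m + -m : ℤ) = 0 by ring] at this
  -- the coefficient maps
  let μ : ∀ (m : ℤ), Fin (k m) → ((𝒜 m) →+ (𝒜 0)) := fun m i =>
    AddMonoidHom.mk' (fun c => ⟨(c : R) * y m i, memA0 m c c.2 i⟩)
      (fun c d => Subtype.ext (add_mul _ _ _))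
  let g : ∀ m : ℤ, (𝒜 m) →+ (((n : ℤ) × Fin (k n)) →₀ (𝒜 0)) := fun m =>
    ∑ i : Fin (k m), (Finsupp.singleAddHom (⟨m, i⟩ : (n : ℤ) × Fin (k n))).comp (μ m i)
  have g_apply : ∀ (m : ℤ) (c : 𝒜 m),
      g m c = ∑ i : Fin (k m), Finsupp.single (⟨m, i⟩ : (n : ℤ) × Fin (k n)) (μ m i c) := by
    intro m c
    simp [g, AddMonoidHom.finset_sum_apply]
  let s₀ : R →+ (((n : ℤ) × Fin (k n)) →₀ (𝒜 0)) :=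
    (DFinsupp.sumAddHom g).comp (DirectSum.decomposeAddEquiv 𝒜).toAddMonoidHom
  have s₀_homog : ∀ (m : ℤ) (c : 𝒜 m), s₀ (c : R) = g m c := by
    intro m c
    show DFinsupp.sumAddHom g (DirectSum.decompose 𝒜 (c : R)) = g m c
    rw [DirectSum.decompose_coe]
    erw [DFinsupp.sumAddHom_single]
  -- s₀ is `𝒜 0`-linear
  have s₀_smul : ∀ (a : 𝒜 0) (r : R), s₀ ((a : R) * r) = a • s₀ r := by
    intro a r
    refine addHom_ext_homog 𝒜
      (φ := s₀.comp (AddMonoidHom.mulLeft (a : R)))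
      (ψ := (DistribMulAction.toAddMonoidHom (((n : ℤ) × Fin (k n)) →₀ (𝒜 0)) a).comp s₀)
      (fun m c hc => ?_) r
    have hac : (a : R) * c ∈ 𝒜 m := by
      have := SetLike.mul_mem_graded a.2 hc
      rwa [zero_add] at this
    show s₀ ((a : R) * c) = a • s₀ c
    have e1 : s₀ ((a : R) * c) = g m ⟨(a : R) * c, hac⟩ := s₀_homog m ⟨_, hac⟩
    have e2 : s₀ c = g m ⟨c, hc⟩ := s₀_homog m ⟨c, hc⟩
    rw [e1, e2, g_apply, g_apply]
    have hswap : a • (∑ i : Fin (k m),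
        Finsupp.single (⟨m, i⟩ : (n : ℤ) × Fin (k n)) (μ m i ⟨c, hc⟩)) =
        ∑ i : Fin (k m), a • Finsupp.single (⟨m, i⟩ : (n : ℤ) × Fin (k n)) (μ m i ⟨c, hc⟩) :=
      by
        ext j
        simp only [Finsupp.smul_apply, Finset.sum_apply', smul_eq_mul, Finset.mul_sum]
    rw [hswap]
    refine Finset.sum_congr rfl fun i _ => ?_
    rw [Finsupp.smul_single]
    congr 1
    exact Subtype.ext (mul_assoc (a : R) c (y m i))
  let sLin : R →ₗ[𝒜 0] (((n : ℤ) × Fin (k n)) →₀ (𝒜 0)) :=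
    { toFun := s₀
      map_add' := s₀.map_add
      map_smul' := fun a r => s₀_smul a r }
  let π : (((n : ℤ) × Fin (k n)) →₀ (𝒜 0)) →ₗ[𝒜 0] R :=
    Finsupp.linearCombination (𝒜 0) (fun j : (n : ℤ) × Fin (k n) => x j.1 j.2)
  have hπs : ∀ r : R, π (sLin r) = r := by
    intro r
    refine addHom_ext_homog 𝒜
      (φ := (π.toAddMonoidHom).comp s₀) (ψ := AddMonoidHom.id R) (fun m c hc => ?_) r
    show π (s₀ c) = c
    have e2 : s₀ c = g m ⟨c, hc⟩ := s₀_homog m ⟨c, hc⟩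
    rw [e2, g_apply, map_sum]
    have h1 : ∀ i : Fin (k m),
        π (Finsupp.single (⟨m, i⟩ : (n : ℤ) × Fin (k n)) (μ m i ⟨c, hc⟩))
        = (c * y m i) * x m i := by
      intro i
      rw [Finsupp.linearCombination_single]
      rfl
    rw [Finset.sum_congr rfl fun i _ => h1 i]
    simp only [mul_assoc]
    rw [← Finset.mul_sum, hsum m, mul_one]
  exact Module.Projective.of_split sLin π (LinearMap.ext hπs)

end ProjR

section ProjTrunc

theorem projective_Rle (h : IsStronglyGraded 𝒜) :
    Module.Projective (𝒜 0) (RleSubring 𝒜) := by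
  classical
  haveI := projective_R 𝒜 h
  let prj : R →ₗ[𝒜 0] RleSubring 𝒜 :=
    { toFun := fun r => ⟨trunc 𝒜 (· ≤ 0) r, trunc_mem 𝒜 (· ≤ 0) r⟩
      map_add' := fun r s => Subtype.ext (map_add _ r s)
      map_smul' := fun a r => Subtype.ext (trunc_smul 𝒜 (· ≤ 0) a r) }
  let inc : RleSubring 𝒜 →ₗ[𝒜 0] R :=
    { toFun := fun z => (z : R)
      map_add' := fun _ _ => rfl
      map_smul' := fun _ _ => rfl }
  refine Module.Projective.of_split inc prj (LinearMap.ext fun z => ?_)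
  exact Subtype.ext (trunc_eq_self 𝒜 (· ≤ 0) z.2)

theorem projective_Rge (h : IsStronglyGraded 𝒜) :
    Module.Projective (𝒜 0) (RgeSubring 𝒜) := by
  classical
  haveI := projective_R 𝒜 h
  let prj : R →ₗ[𝒜 0] RgeSubring 𝒜 :=
    { toFun := fun r => ⟨trunc 𝒜 (0 ≤ ·) r, trunc_mem 𝒜 (0 ≤ ·) r⟩
      map_add' := fun r s => Subtype.ext (map_add _ r s)
      map_smul' := fun a r => Subtype.ext (trunc_smul 𝒜 (0 ≤ ·) a r) }
  let inc : RgeSubring 𝒜 →ₗ[𝒜 0] R :=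
    { toFun := fun z => (z : R)
      map_add' := fun _ _ => rfl
      map_smul' := fun _ _ => rfl }
  refine Module.Projective.of_split inc prj (LinearMap.ext fun z => ?_)
  exact Subtype.ext (trunc_eq_self 𝒜 (0 ≤ ·) z.2)

end ProjTrunc

section Trans

/-- Transitivity of projectivity along a ring hom. -/
theorem projective_comp {A S : Type*} [Ring A] [Ring S] (f : A →+* S)
    (M : Type u) [AddCommGroup M] [Module S M]
    (hM : Module.Projective S M) :
    letI : Module A S := Module.compHom S f
    letI : Module A M := Module.compHom M f
    Module.Projective A S → Module.Projective A M := by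
  letI : Module A S := Module.compHom S f
  letI : Module A M := Module.compHom M f
  intro hS
  classical
  haveI : IsScalarTower A S M :=
    ⟨fun a s m => by show (f a * s) • m = f a • s • m; rw [mul_smul]⟩
  haveI : IsScalarTower A S (M →₀ S) :=
    ⟨fun a s g => by
      ext j
      show (f a * s) * g j = f a * (s * g j)
      rw [mul_assoc]⟩
  obtain ⟨sec, hsec⟩ := (Module.projective_def' (R := S) (P := M)).mp hM
  haveI : Module.Projective A (M →₀ S) := by
    haveI : ∀ _ : M, Module.Projective A S := fun _ => hS
    exact Module.Projective.of_equiv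
      (finsuppLequivDFinsupp (ι := M) (M := S) A : (M →₀ S) ≃ₗ[A] Π₀ _ : M, S).symm
  refine Module.Projective.of_split
    (LinearMap.restrictScalars A sec)
    (LinearMap.restrictScalars A (Finsupp.linearCombination S (id : M → M)))
    (LinearMap.ext fun m => ?_)
  exact LinearMap.congr_fun hsec m

end Trans

/-- If `R` is strongly ℤ-graded then `R`, `R_{≤0}` and `R_{≥0}` are projective
left `𝒜 0`-modules, and consequently every projective module over `R`
(respectively over `R_{≤0}`, respectively over `R_{≥0}`) is projective as an
`𝒜 0`-module after restriction of scalars. -/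
theorem projective_over_grade_zero (h : IsStronglyGraded 𝒜) :
    Module.Projective (𝒜 0) R ∧
    Module.Projective (𝒜 0) (RleSubring 𝒜) ∧
    Module.Projective (𝒜 0) (RgeSubring 𝒜) ∧
    (∀ (M : Type u) [AddCommGroup M] [Module R M],
      Module.Projective R M → Module.Projective (𝒜 0) M) ∧
    (∀ (M : Type u) [AddCommGroup M] [Module (RleSubring 𝒜) M],
      Module.Projective (RleSubring 𝒜) M → Module.Projective (𝒜 0) M) ∧
    (∀ (M : Type u) [AddCommGroup M] [Module (RgeSubring 𝒜) M],
      Module.Projective (RgeSubring 𝒜) M → Module.Projective (𝒜 0) M) := by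
  classical
  refine ⟨projective_R 𝒜 h, projective_Rle 𝒜 h, projective_Rge 𝒜 h, ?_, ?_, ?_⟩
  · intro M _ _ hM
    exact projective_comp (incl0 𝒜) M hM (projective_R 𝒜 h)
  · intro M _ _ hM
    exact projective_comp (incl0le 𝒜) M hM (projective_Rle 𝒜 h)
  · intro M _ _ hM
    exact projective_comp (incl0ge 𝒜) M hM (projective_Rge 𝒜 h)
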